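/- Let {J'^a_n} be a level-k representation of affine sl(2) on W. Let {J^a_n} be a level-k representation on V possessing a vector v₀ with J^a_n v₀ = 0 for all n ≥ 0 and a ∈ {0,+,−}, and such that V is freely generated from v₀ by the negative modes: there exists an enumeration X₁, X₂, X₃, … of the family {J^a_{−n} : a ∈ {0,+,−}, n ≥ 1} such that the vectors X_{i₁} X_{i₂} ⋯ X_{i_r} v₀, over all finite non-increasing index sequences i₁ ≥ ⋯ ≥ i_r (r ≥ 0), form a basis of V (V is the vacuum module D^k₀). Then the map β ↦ (w ↦ β(v₀ ⊗ w)) is a linear isomorphism from the space of two-point conformal blocks for (V, W) onto the space { ψ ∈ W* : ψ ∘ J'^a_{−m} = 0 for all a ∈ {0,+,−} and all m ≥ 0 }, i.e. onto the one-point conformal block space of W on ℂP¹; the vacuum insertion can be removed. -/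

import Mathlib

/-!
Level-`k` representations of affine `sl(2)`.

A level-`k` representation of affine `sl(2)` on a complex vector space `V` is a
family of linear endomorphisms `J⁰_n, J⁺_n, J⁻_n` (`n ∈ ℤ`) satisfying
`[J⁺_m, J⁻_n] = J⁰_{m+n} + k·m·δ_{m+n,0}·id`, `[J⁰_m, J^±_n] = ±2 J^±_{m+n}`,
`[J⁰_m, J⁰_n] = 2k·m·δ_{m+n,0}·id`, `[J⁺_m, J⁺_n] = [J⁻_m, J⁻_n] = 0`.

For `s ∈ ℤ`, the spectral flow `ϑ_s` replaces `J^±_n` by `J^±_{n∓s}` and `J⁰_n` by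
`J⁰_n − s·k·δ_{n,0}·id`.
-/

noncomputable section

/-- a family of operators `J⁰_n, J⁺_n, J⁻_n` (`n ∈ ℤ`) on `V` -/
structure AffineFamily (V : Type*) [AddCommGroup V] [Module ℂ V] where
  Jz : ℤ → Module.End ℂ V
  Jp : ℤ → Module.End ℂ V
  Jm : ℤ → Module.End ℂ V

variable {V W : Type*}

/-- the commutation relations making an `AffineFamily` a level-`k` representation of
affine `sl(2)` -/
def IsLevelRep [AddCommGroup V] [Module ℂ V] (k : ℂ) (ρ : AffineFamily V) : Prop :=
  (∀ m n : ℤ, ρ.Jp m * ρ.Jm n - ρ.Jm n * ρ.Jp m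
      = ρ.Jz (m + n) + (if m + n = 0 then k * (m : ℂ) else 0) • 1) ∧
  (∀ m n : ℤ, ρ.Jz m * ρ.Jp n - ρ.Jp n * ρ.Jz m = (2 : ℂ) • ρ.Jp (m + n)) ∧
  (∀ m n : ℤ, ρ.Jz m * ρ.Jm n - ρ.Jm n * ρ.Jz m = (-2 : ℂ) • ρ.Jm (m + n)) ∧
  (∀ m n : ℤ, ρ.Jz m * ρ.Jz n - ρ.Jz n * ρ.Jz m
      = (if m + n = 0 then 2 * k * (m : ℂ) else 0) • 1) ∧
  (∀ m n : ℤ, ρ.Jp m * ρ.Jp n = ρ.Jp n * ρ.Jp m) ∧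
  (∀ m n : ℤ, ρ.Jm m * ρ.Jm n = ρ.Jm n * ρ.Jm m)

/-- the spectral flow `ϑ_s` of a level-`k` family:
`J^±_n ↦ J^±_{n∓s}`, `J⁰_n ↦ J⁰_n − s·k·δ_{n,0}·id` -/
def flow [AddCommGroup V] [Module ℂ V] (k : ℂ) (s : ℤ) (ρ : AffineFamily V) :
    AffineFamily V where
  Jz n := ρ.Jz n - (if n = 0 then (s : ℂ) * k else 0) • 1
  Jp n := ρ.Jp (n - s)
  Jm n := ρ.Jm (n + s)

open TensorProduct

/-- the negative-mode operators `{J^a_{−n} : a ∈ {0,+,−}, n ≥ 1}` of a family,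
labelled by `Fin 3 × ℕ` (the label `(a, n)` corresponds to the mode `−(n+1)`) -/
def negMode [AddCommGroup V] [Module ℂ V] (ρ : AffineFamily V) (p : Fin 3 × ℕ) :
    Module.End ℂ V :=
  if p.1 = 0 then ρ.Jz (-((p.2 : ℤ) + 1))
  else if p.1 = 1 then ρ.Jp (-((p.2 : ℤ) + 1))
  else ρ.Jm (-((p.2 : ℤ) + 1))

namespace Stmt16Aux

def mode [AddCommGroup V] [Module ℂ V] (ρ : AffineFamily V) (t : Fin 3 × ℤ) :
    Module.End ℂ V :=
  if t.1 = 0 then ρ.Jz t.2 else if t.1 = 1 then ρ.Jp t.2 else ρ.Jm t.2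

lemma negMode_eq_mode [AddCommGroup V] [Module ℂ V] (ρ : AffineFamily V) (p : Fin 3 × ℕ) :
    negMode ρ p = mode ρ (p.1, -((p.2 : ℤ) + 1)) := rfl

def brkc (t s : Fin 3 × ℤ) : ℂ :=
  if t.1 = 0 then (if s.1 = 0 then 0 else if s.1 = 1 then 2 else -2)
  else if t.1 = 1 then (if s.1 = 0 then -2 else if s.1 = 1 then 0 else 1)
  else (if s.1 = 0 then 2 else if s.1 = 1 then -1 else 0)

def brkt (t s : Fin 3 × ℤ) : Fin 3 × ℤ :=
  (if t.1 = 0 then (if s.1 = 0 then 0 else if s.1 = 1 then 1 else 2)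
   else if t.1 = 1 then (if s.1 = 0 then 1 else if s.1 = 1 then 1 else 0)
   else (if s.1 = 0 then 2 else if s.1 = 1 then 0 else 2), t.2 + s.2)

def brkg (k : ℂ) (t s : Fin 3 × ℤ) : ℂ :=
  if t.2 + s.2 = 0 then
    (if t.1 = 0 ∧ s.1 = 0 then 2 * k * (t.2 : ℂ)
     else if (t.1 = 1 ∧ s.1 = 2) ∨ (t.1 = 2 ∧ s.1 = 1) then k * (t.2 : ℂ) else 0)
  else 0

lemma brkg_eq_zero (k : ℂ) {t s : Fin 3 × ℤ} (h : t.2 + s.2 ≠ 0) : brkg k t s = 0 := by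
  simp [brkg, h]

lemma mode_mul {V : Type*} [AddCommGroup V] [Module ℂ V] {k : ℂ} {ρ : AffineFamily V}
    (hρ : IsLevelRep k ρ) (t s : Fin 3 × ℤ) :
    mode ρ t * mode ρ s
      = mode ρ s * mode ρ t + brkc t s • mode ρ (brkt t s) + brkg k t s • 1 := by
  obtain ⟨hpm, hzp, hzm, hzz, hpp, hmm⟩ := hρ
  obtain ⟨a, n⟩ := t
  obtain ⟨b, m⟩ := s
  fin_cases a <;> fin_cases b <;>
    norm_num [mode, brkc, brkt, brkg, Fin.ext_iff, ite_smul]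
  · -- zz
    have h := hzz n m
    simp only [ite_smul, zero_smul] at h
    rw [sub_eq_iff_eq_add] at h
    rw [h]; module
  · -- zp
    have h := hzp n m
    rw [sub_eq_iff_eq_add] at h
    rw [h]; module
  · -- zm
    have h := hzm n m
    rw [sub_eq_iff_eq_add] at h
    rw [h]; module
  · -- pz
    have h := hzp m n
    rw [add_comm m n, sub_eq_iff_eq_add] at h
    rw [h]; module
  · -- pp
    exact hpp n m
  · -- pm
    have h := hpm n m
    simp only [ite_smul, zero_smul] at h
    rw [sub_eq_iff_eq_add] at h
    rw [h]; module
  · -- mz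
    have h := hzm m n
    rw [add_comm m n, sub_eq_iff_eq_add] at h
    rw [h]; module
  · -- mp
    have h := hpm m n
    simp only [ite_smul, zero_smul, add_comm m n] at h
    by_cases hs : n + m = 0
    · have hm : (m : ℂ) = -(n : ℂ) := by exact_mod_cast (by omega : m = -n)
      simp only [if_pos hs] at h ⊢
      rw [show (k * (m:ℂ)) = -(k * (n:ℂ)) from by rw [hm]; ring] at h
      rw [sub_eq_iff_eq_add] at h
      rw [h]; module
    · simp only [if_neg hs, add_zero] at h ⊢
      rw [sub_eq_iff_eq_add] at h
      rw [h]; module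
  · -- mm
    exact hmm n m


def toMode (p : Fin 3 × ℕ) : Fin 3 × ℤ := (p.1, -((p.2 : ℤ) + 1))

def nbc (p q : Fin 3 × ℕ) : ℂ := brkc (toMode p) (toMode q)

def nbt (p q : Fin 3 × ℕ) : Fin 3 × ℕ := ((brkt (toMode p) (toMode q)).1, p.2 + q.2 + 1)

lemma toMode_nbt (p q : Fin 3 × ℕ) : toMode (nbt p q) = brkt (toMode p) (toMode q) := by
  unfold toMode nbt brkt
  refine Prod.ext rfl ?_
  push_cast
  ring

lemma negMode_mul {V : Type*} [AddCommGroup V] [Module ℂ V] {k : ℂ} {ρ : AffineFamily V}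
    (hρ : IsLevelRep k ρ) (p q : Fin 3 × ℕ) :
    negMode ρ p * negMode ρ q
      = negMode ρ q * negMode ρ p + nbc p q • negMode ρ (nbt p q) := by
  rw [negMode_eq_mode ρ p, negMode_eq_mode ρ q, negMode_eq_mode ρ (nbt p q)]
  have hg : brkg k (toMode p) (toMode q) = 0 :=
    brkg_eq_zero k (by simp only [toMode]; omega)
  have := mode_mul hρ (toMode p) (toMode q)
  rw [hg, zero_smul, add_zero] at this
  rw [show ((p.1 : Fin 3), -((p.2:ℤ)+1)) = toMode p from rfl,
      show ((q.1 : Fin 3), -((q.2:ℤ)+1)) = toMode q from rfl,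
      show (((nbt p q).1 : Fin 3), -(((nbt p q).2:ℤ)+1)) = toMode (nbt p q) from rfl,
      toMode_nbt]
  exact this

variable {M : Type*}

/-- product of negative modes indexed by a word -/
def act [AddCommGroup V] [Module ℂ V] (ρ : AffineFamily V) (e : ℕ ≃ Fin 3 × ℕ)
    (w : List ℕ) : Module.End ℂ V :=
  (w.map fun i => negMode ρ (e i)).prod

lemma act_nil [AddCommGroup V] [Module ℂ V] (ρ : AffineFamily V) (e : ℕ ≃ Fin 3 × ℕ) :
    act ρ e [] = 1 := rfl

lemma act_cons [AddCommGroup V] [Module ℂ V] (ρ : AffineFamily V) (e : ℕ ≃ Fin 3 × ℕ)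
    (i : ℕ) (w : List ℕ) :
    act ρ e (i :: w) = negMode ρ (e i) * act ρ e w := by
  simp [act]

lemma act_append [AddCommGroup V] [Module ℂ V] (ρ : AffineFamily V) (e : ℕ ≃ Fin 3 × ℕ)
    (u w : List ℕ) :
    act ρ e (u ++ w) = act ρ e u * act ρ e w := by
  simp [act, List.prod_append]

/-- the straightening identity for a word with an adjacent ascent -/
lemma act_swap {V : Type*} [AddCommGroup V] [Module ℂ V] {k : ℂ} {ρ : AffineFamily V}
    (hρ : IsLevelRep k ρ) (e : ℕ ≃ Fin 3 × ℕ) (u : List ℕ) (i j : ℕ) (tl : List ℕ) :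
    act ρ e (u ++ i :: j :: tl)
      = act ρ e (u ++ j :: i :: tl)
        + nbc (e i) (e j) • act ρ e (u ++ e.symm (nbt (e i) (e j)) :: tl) := by
  simp only [act_append, act_cons, e.apply_symm_apply]
  rw [show negMode ρ (e i) * (negMode ρ (e j) * act ρ e tl)
      = (negMode ρ (e i) * negMode ρ (e j)) * act ρ e tl from (mul_assoc _ _ _).symm,
    negMode_mul hρ (e i) (e j)]
  rw [add_mul, mul_add, smul_mul_assoc, mul_smul_comm, mul_assoc]

/-- measure used for the straightening induction -/
def Tm : List ℕ → ℕ
  | [] => 0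
  | a :: w => a + w.sum + Tm w

lemma Tm_cons (a : ℕ) (w : List ℕ) : Tm (a :: w) = a + w.sum + Tm w := rfl

lemma Tm_swap (u : List ℕ) {i j : ℕ} (tl : List ℕ) (hij : i < j) :
    Tm (u ++ j :: i :: tl) < Tm (u ++ i :: j :: tl) := by
  induction u with
  | nil =>
    simp only [List.nil_append, Tm_cons, List.sum_cons]; omega
  | cons a u ih =>
    have hs : (u ++ j :: i :: tl).sum = (u ++ i :: j :: tl).sum := by
      simp [List.sum_append]; omega
    rw [List.cons_append, List.cons_append, Tm_cons, Tm_cons, hs]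
    omega

lemma exists_desc : ∀ (w : List ℕ), ¬ w.Chain' (· ≥ ·) →
    ∃ u i j tl, w = u ++ i :: j :: tl ∧ i < j := by
  intro w
  induction w with
  | nil => intro h; exact absurd List.isChain_nil h
  | cons a w ih =>
    intro h
    cases w with
    | nil => exact absurd (List.isChain_singleton a) h
    | cons c w' =>
      simp only [List.Chain', List.isChain_cons_cons] at h
      by_cases hac : a ≥ c
      · have h2 : ¬ (c :: w').Chain' (· ≥ ·) := fun hh => h ⟨hac, hh⟩
        obtain ⟨u, i, j, tl, heq, hij⟩ := ih h2
        exact ⟨a :: u, i, j, tl, by rw [List.cons_append, ← heq], hij⟩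
      · exact ⟨[], a, c, w', rfl, by omega⟩


lemma negMode_eq_mode' {V : Type*} [AddCommGroup V] [Module ℂ V] (ρ : AffineFamily V)
    (p : Fin 3 × ℕ) : negMode ρ p = mode ρ (toMode p) := rfl

section Main

variable {V M : Type*} [AddCommGroup V] [Module ℂ V] [AddCommGroup M] [Module ℂ M]
variable {k : ℂ} {ρ : AffineFamily V} {σ : AffineFamily M}
variable {e : ℕ ≃ Fin 3 × ℕ} {v₀ : V} {ψ : M}
variable {b : Module.Basis {l : List ℕ // l.Chain' (· ≥ ·)} ℂ V}

lemma claimC (hρ : IsLevelRep k ρ) (hσ : IsLevelRep k σ)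
    (hb : ∀ l : {l : List ℕ // l.Chain' (· ≥ ·)}, b l = act ρ e l.1 v₀)
    (w : List ℕ) :
    (b.constr ℂ fun l => act σ e l.1 ψ) (act ρ e w v₀) = act σ e w ψ := by
  suffices H : ∀ (n t : ℕ) (w : List ℕ), w.length ≤ n → Tm w ≤ t →
      (b.constr ℂ (fun l => act σ e l.1 ψ)) (act ρ e w v₀) = act σ e w ψ from
    H w.length (Tm w) w le_rfl le_rfl
  intro n
  induction n using Nat.strong_induction_on with
  | _ n ihn =>
  intro t
  induction t using Nat.strong_induction_on with
  | _ t iht =>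
  intro w hlen hT
  by_cases hc : w.Chain' (· ≥ ·)
  · rw [show act ρ e w v₀ = b ⟨w, hc⟩ from (hb ⟨w, hc⟩).symm, Module.Basis.constr_basis]
  · obtain ⟨u, i, j, tl, rfl, hij⟩ := exists_desc _ hc
    have e1 : act ρ e (u ++ i :: j :: tl) v₀
        = act ρ e (u ++ j :: i :: tl) v₀
          + nbc (e i) (e j) • act ρ e (u ++ e.symm (nbt (e i) (e j)) :: tl) v₀ := by
      rw [act_swap hρ e u i j tl]
      simp only [LinearMap.add_apply, LinearMap.smul_apply]
    have len1 : (u ++ j :: i :: tl).length ≤ n := by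
      simp only [List.length_append, List.length_cons] at hlen ⊢; omega
    have h1 := iht (Tm (u ++ j :: i :: tl))
      (lt_of_lt_of_le (Tm_swap u tl hij) hT) (u ++ j :: i :: tl) len1 le_rfl
    have hn : 2 ≤ n := by
      simp only [List.length_append, List.length_cons] at hlen; omega
    have h2 := ihn (n - 1) (by omega)
      (Tm (u ++ e.symm (nbt (e i) (e j)) :: tl))
      (u ++ e.symm (nbt (e i) (e j)) :: tl)
      (by simp only [List.length_append, List.length_cons] at hlen ⊢; omega) le_rfl
    rw [e1, map_add, map_smul, h1, h2, act_swap hσ e u i j tl]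
    simp only [LinearMap.add_apply, LinearMap.smul_apply]



lemma claimE (hρ : IsLevelRep k ρ) (hσ : IsLevelRep k σ)
    (hb : ∀ l : {l : List ℕ // l.Chain' (· ≥ ·)}, b l = act ρ e l.1 v₀)
    (p : Fin 3 × ℕ) (x : V) :
    (b.constr ℂ fun l => act σ e l.1 ψ) (negMode ρ p x)
      = negMode σ p ((b.constr ℂ fun l => act σ e l.1 ψ) x) := by
  have key : (b.constr ℂ fun l => act σ e l.1 ψ) ∘ₗ negMode ρ p
      = negMode σ p ∘ₗ (b.constr ℂ fun l => act σ e l.1 ψ) := by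
    apply b.ext
    intro l
    simp only [LinearMap.comp_apply]
    rw [hb l]
    rw [show negMode ρ p (act ρ e l.1 v₀) = act ρ e (e.symm p :: l.1) v₀ from by
        rw [act_cons]; simp [Module.End.mul_apply, e.apply_symm_apply]]
    rw [claimC hρ hσ hb, claimC hρ hσ hb, act_cons]
    simp [Module.End.mul_apply, e.apply_symm_apply]
  exact LinearMap.congr_fun key x

lemma claimD' (hρ : IsLevelRep k ρ) (hσ : IsLevelRep k σ)
    (hb : ∀ l : {l : List ℕ // l.Chain' (· ≥ ·)}, b l = act ρ e l.1 v₀)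
    (hv : ∀ t : Fin 3 × ℤ, 0 ≤ t.2 → mode ρ t v₀ = 0)
    (hψ : ∀ t : Fin 3 × ℤ, 0 ≤ t.2 → mode σ t ψ = 0) :
    ∀ (w : List ℕ) (t : Fin 3 × ℤ),
      (b.constr ℂ fun l => act σ e l.1 ψ) (mode ρ t (act ρ e w v₀))
        = mode σ t (act σ e w ψ) := by
  intro w
  induction w with
  | nil =>
    intro t
    rw [act_nil, act_nil, Module.End.one_apply, Module.End.one_apply]
    by_cases ht : 0 ≤ t.2
    · rw [hv t ht, hψ t ht, map_zero]
    · have harg : toMode (t.1, (-t.2 - 1).toNat) = t := by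
        obtain ⟨a, n⟩ := t
        refine Prod.ext rfl ?_
        simp only [toMode]
        simp only [not_le] at ht
        omega
      rw [← harg, ← negMode_eq_mode', ← negMode_eq_mode']
      rw [show negMode ρ (t.1, (-t.2 - 1).toNat) v₀
          = act ρ e [e.symm (t.1, (-t.2 - 1).toNat)] v₀ from by
            rw [act_cons, act_nil, mul_one]; simp [e.apply_symm_apply],
        claimC hρ hσ hb, act_cons, act_nil, mul_one]
      simp [e.apply_symm_apply]
  | cons i w ih =>
    intro t
    rw [act_cons, act_cons, Module.End.mul_apply, Module.End.mul_apply]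
    set z := act ρ e w v₀ with hz
    set y := act σ e w ψ with hy
    have lhs_eq : mode ρ t (negMode ρ (e i) z)
        = negMode ρ (e i) (mode ρ t z)
          + brkc t (toMode (e i)) • mode ρ (brkt t (toMode (e i))) z
          + brkg k t (toMode (e i)) • z := by
      have h := congrArg (fun f : Module.End ℂ V => f z) (mode_mul hρ t (toMode (e i)))
      simp only [Module.End.mul_apply, LinearMap.add_apply, LinearMap.smul_apply,
        Module.End.one_apply, ← negMode_eq_mode'] at h
      exact h
    have rhs_eq : mode σ t (negMode σ (e i) y)
        = negMode σ (e i) (mode σ t y)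
          + brkc t (toMode (e i)) • mode σ (brkt t (toMode (e i))) y
          + brkg k t (toMode (e i)) • y := by
      have h := congrArg (fun f : Module.End ℂ M => f y) (mode_mul hσ t (toMode (e i)))
      simp only [Module.End.mul_apply, LinearMap.add_apply, LinearMap.smul_apply,
        Module.End.one_apply, ← negMode_eq_mode'] at h
      exact h
    rw [lhs_eq, rhs_eq, map_add, map_add, map_smul, map_smul,
      claimE hρ hσ hb, ih t, ih (brkt t (toMode (e i))), hz, hy, claimC hρ hσ hb]

lemma claimD (hρ : IsLevelRep k ρ) (hσ : IsLevelRep k σ)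
    (hb : ∀ l : {l : List ℕ // l.Chain' (· ≥ ·)}, b l = act ρ e l.1 v₀)
    (hv : ∀ t : Fin 3 × ℤ, 0 ≤ t.2 → mode ρ t v₀ = 0)
    (hψ : ∀ t : Fin 3 × ℤ, 0 ≤ t.2 → mode σ t ψ = 0)
    (t : Fin 3 × ℤ) (x : V) :
    (b.constr ℂ fun l => act σ e l.1 ψ) (mode ρ t x)
      = mode σ t ((b.constr ℂ fun l => act σ e l.1 ψ) x) := by
  have key : (b.constr ℂ fun l => act σ e l.1 ψ) ∘ₗ mode ρ t
      = mode σ t ∘ₗ (b.constr ℂ fun l => act σ e l.1 ψ) := by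
    apply b.ext
    intro l
    simp only [LinearMap.comp_apply]
    rw [hb l, claimD' hρ hσ hb hv hψ, ← hb l, Module.Basis.constr_basis]
  exact LinearMap.congr_fun key x



end Main

/-- the contragredient family on the dual space -/
def dualFamily {W : Type*} [AddCommGroup W] [Module ℂ W] (ρ' : AffineFamily W) :
    AffineFamily (W →ₗ[ℂ] ℂ) where
  Jz n := - LinearMap.lcomp ℂ ℂ (ρ'.Jz (-n))
  Jp n := - LinearMap.lcomp ℂ ℂ (ρ'.Jp (-n))
  Jm n := - LinearMap.lcomp ℂ ℂ (ρ'.Jm (-n))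

lemma dual_isLevelRep {W : Type*} [AddCommGroup W] [Module ℂ W] {k : ℂ}
    {ρ' : AffineFamily W} (h : IsLevelRep k ρ') : IsLevelRep k (dualFamily ρ') := by
  obtain ⟨hpm, hzp, hzm, hzz, hpp, hmm⟩ := h
  refine ⟨fun m n => ?_, fun m n => ?_, fun m n => ?_, fun m n => ?_,
    fun m n => ?_, fun m n => ?_⟩ <;>
    (ext φ w
     simp only [dualFamily, LinearMap.sub_apply, Module.End.mul_apply, LinearMap.neg_apply,
       LinearMap.lcomp_apply, LinearMap.add_apply, LinearMap.smul_apply, Module.End.one_apply,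
       smul_eq_mul])
  · -- pm
    have hφ := congrArg φ (LinearMap.congr_fun (hpm (-m) (-n)) w)
    simp only [LinearMap.sub_apply, Module.End.mul_apply, LinearMap.add_apply,
      LinearMap.smul_apply, Module.End.one_apply, smul_eq_mul, map_sub, map_add,
      map_smul] at hφ
    by_cases hs : m + n = 0
    · rw [if_pos hs]
      rw [if_pos (show -m + -n = 0 by omega), show -m + -n = -(m+n) by ring] at hφ
      push_cast at hφ ⊢
      linear_combination -hφ
    · rw [if_neg hs]
      rw [if_neg (show ¬ (-m + -n = 0) by omega), show -m + -n = -(m+n) by ring] at hφ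
      linear_combination -hφ
  · -- zp
    have hφ := congrArg φ (LinearMap.congr_fun (hzp (-m) (-n)) w)
    simp only [LinearMap.sub_apply, Module.End.mul_apply, LinearMap.smul_apply,
      map_sub, map_smul, smul_eq_mul] at hφ
    rw [show -m + -n = -(m + n) by ring] at hφ
    linear_combination -hφ
  · -- zm
    have hφ := congrArg φ (LinearMap.congr_fun (hzm (-m) (-n)) w)
    simp only [LinearMap.sub_apply, Module.End.mul_apply, LinearMap.smul_apply,
      map_sub, map_smul, smul_eq_mul] at hφ
    rw [show -m + -n = -(m + n) by ring] at hφ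
    linear_combination -hφ
  · -- zz
    have hφ := congrArg φ (LinearMap.congr_fun (hzz (-m) (-n)) w)
    simp only [LinearMap.sub_apply, Module.End.mul_apply, LinearMap.smul_apply,
      Module.End.one_apply, smul_eq_mul, map_sub, map_smul] at hφ
    by_cases hs : m + n = 0
    · rw [if_pos hs]
      rw [if_pos (show -m + -n = 0 by omega)] at hφ
      push_cast at hφ ⊢
      linear_combination -hφ
    · rw [if_neg hs]
      rw [if_neg (show ¬ (-m + -n = 0) by omega)] at hφ
      linear_combination -hφ
  · -- pp
    have hφ := congrArg φ (LinearMap.congr_fun (hpp (-m) (-n)) w)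
    simp only [Module.End.mul_apply] at hφ
    linear_combination -hφ
  · -- mm
    have hφ := congrArg φ (LinearMap.congr_fun (hmm (-m) (-n)) w)
    simp only [Module.End.mul_apply] at hφ
    linear_combination -hφ


section Main2

variable {V M : Type*} [AddCommGroup V] [Module ℂ V] [AddCommGroup M] [Module ℂ M]
variable {ρ : AffineFamily V} {σ : AffineFamily M}
variable {e : ℕ ≃ Fin 3 × ℕ} {v₀ : V}
variable {b : Module.Basis {l : List ℕ // l.Chain' (· ≥ ·)} ℂ V}

lemma determined (hb : ∀ l : {l : List ℕ // l.Chain' (· ≥ ·)}, b l = act ρ e l.1 v₀)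
    (G : V →ₗ[ℂ] M)
    (hG : ∀ (p : Fin 3 × ℕ) (x : V), G (negMode ρ p x) = negMode σ p (G x)) :
    ∀ (w : List ℕ) (h : w.Chain' (· ≥ ·)), G (b ⟨w, h⟩) = act σ e w (G v₀) := by
  intro w
  induction w with
  | nil =>
    intro h
    rw [hb ⟨[], h⟩, act_nil, act_nil, Module.End.one_apply, Module.End.one_apply]
  | cons i w ih =>
    intro h
    have hb2 : (b ⟨i :: w, h⟩ : V) = negMode ρ (e i) (b ⟨w, h.tail⟩) := by
      rw [hb ⟨i :: w, h⟩, hb ⟨w, h.tail⟩, act_cons, Module.End.mul_apply]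
    rw [hb2, hG, ih h.tail, act_cons, Module.End.mul_apply]

end Main2

lemma curry_intertwine {V W : Type*} [AddCommGroup V] [Module ℂ V]
    [AddCommGroup W] [Module ℂ W]
    (ρ : AffineFamily V) (ρ' : AffineFamily W) (β : (V ⊗[ℂ] W) →ₗ[ℂ] ℂ)
    (hβ : ∀ n : ℤ,
      β ∘ₗ (TensorProduct.map (ρ.Jz n) LinearMap.id
          + TensorProduct.map LinearMap.id (ρ'.Jz (-n))) = 0 ∧
      β ∘ₗ (TensorProduct.map (ρ.Jp n) LinearMap.id
          + TensorProduct.map LinearMap.id (ρ'.Jp (-n))) = 0 ∧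
      β ∘ₗ (TensorProduct.map (ρ.Jm n) LinearMap.id
          + TensorProduct.map LinearMap.id (ρ'.Jm (-n))) = 0)
    (p : Fin 3 × ℕ) (x : V) :
    TensorProduct.curry β (negMode ρ p x)
      = negMode (dualFamily ρ') p (TensorProduct.curry β x) := by
  obtain ⟨a, m⟩ := p
  have hz := (hβ (-((m : ℤ) + 1))).1
  have hp := (hβ (-((m : ℤ) + 1))).2.1
  have hm := (hβ (-((m : ℤ) + 1))).2.2
  fin_cases a
  · ext w
    have h := LinearMap.congr_fun hz (x ⊗ₜ[ℂ] w)
    simp only [LinearMap.comp_apply, LinearMap.add_apply, TensorProduct.map_tmul,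
      LinearMap.id_coe, id_eq, LinearMap.zero_apply, neg_neg, map_add] at h
    norm_num [negMode, dualFamily, TensorProduct.curry_apply, LinearMap.neg_apply,
      LinearMap.lcomp_apply, Fin.ext_iff, neg_neg]
    norm_num at h
    linear_combination h
  · ext w
    have h := LinearMap.congr_fun hp (x ⊗ₜ[ℂ] w)
    simp only [LinearMap.comp_apply, LinearMap.add_apply, TensorProduct.map_tmul,
      LinearMap.id_coe, id_eq, LinearMap.zero_apply, neg_neg, map_add] at h
    norm_num [negMode, dualFamily, TensorProduct.curry_apply, LinearMap.neg_apply,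
      LinearMap.lcomp_apply, Fin.ext_iff, neg_neg]
    norm_num at h
    linear_combination h
  · ext w
    have h := LinearMap.congr_fun hm (x ⊗ₜ[ℂ] w)
    simp only [LinearMap.comp_apply, LinearMap.add_apply, TensorProduct.map_tmul,
      LinearMap.id_coe, id_eq, LinearMap.zero_apply, neg_neg, map_add] at h
    norm_num [negMode, dualFamily, TensorProduct.curry_apply, LinearMap.neg_apply,
      LinearMap.lcomp_apply, Fin.ext_iff, neg_neg]
    norm_num at h
    linear_combination h

end Stmt16Aux
/-- **removal of a vacuum insertion.**  Let `{J'^a_n}` on `W` be a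
level-`k` representation.  Let `{J^a_n}` on `V` be a level-`k` representation with a
vector `v₀` annihilated by all modes `J^a_n`, `n ≥ 0`, and such that `V` is freely
generated from `v₀` by the negative modes: for some enumeration `X₁, X₂, …` of
`{J^a_{−n} : n ≥ 1}` (via a bijection `e`), the vectors `X_{i₁}⋯X_{i_r} v₀` over all
non-increasing index sequences form a basis of `V` (so `V` is the vacuum module
`D^k₀`).  Then `β ↦ (w ↦ β(v₀ ⊗ w))` is a linear isomorphism from the space of
two-point conformal blocks for `(V, W)` onto the one-point conformal block space
`{ψ ∈ W* : ψ ∘ J'^a_{−m} = 0 for all a and all m ≥ 0}`. -/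
theorem statement16 (k : ℂ) [AddCommGroup V] [Module ℂ V] [AddCommGroup W] [Module ℂ W]
    (ρ : AffineFamily V) (hρ : IsLevelRep k ρ)
    (ρ' : AffineFamily W) (hρ' : IsLevelRep k ρ')
    (v₀ : V)
    (hv : ∀ n : ℤ, 0 ≤ n → ρ.Jz n v₀ = 0 ∧ ρ.Jp n v₀ = 0 ∧ ρ.Jm n v₀ = 0)
    (e : ℕ ≃ Fin 3 × ℕ)
    (b : Module.Basis {l : List ℕ // l.Chain' (· ≥ ·)} ℂ V)
    (hb : ∀ l : {l : List ℕ // l.Chain' (· ≥ ·)},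
      b l = ((l.val.map fun i => negMode ρ (e i)).prod) v₀) :
    Set.BijOn
      (fun β : (V ⊗[ℂ] W) →ₗ[ℂ] ℂ => β ∘ₗ TensorProduct.mk ℂ V W v₀)
      {β : (V ⊗[ℂ] W) →ₗ[ℂ] ℂ | ∀ n : ℤ,
        β ∘ₗ (TensorProduct.map (ρ.Jz n) LinearMap.id
            + TensorProduct.map LinearMap.id (ρ'.Jz (-n))) = 0 ∧
        β ∘ₗ (TensorProduct.map (ρ.Jp n) LinearMap.id
            + TensorProduct.map LinearMap.id (ρ'.Jp (-n))) = 0 ∧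
        β ∘ₗ (TensorProduct.map (ρ.Jm n) LinearMap.id
            + TensorProduct.map LinearMap.id (ρ'.Jm (-n))) = 0}
      {ψ : W →ₗ[ℂ] ℂ | ∀ m : ℤ, 0 ≤ m →
        ψ ∘ₗ ρ'.Jz (-m) = 0 ∧ ψ ∘ₗ ρ'.Jp (-m) = 0 ∧ ψ ∘ₗ ρ'.Jm (-m) = 0} := by
  classical
  have hσ : IsLevelRep k (Stmt16Aux.dualFamily ρ') := Stmt16Aux.dual_isLevelRep hρ'
  set σ := Stmt16Aux.dualFamily ρ' with hσdef
  have hb' : ∀ l : {l : List ℕ // l.Chain' (· ≥ ·)}, b l = Stmt16Aux.act ρ e l.1 v₀ :=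
    fun l => hb l
  have hvm : ∀ t : Fin 3 × ℤ, 0 ≤ t.2 → Stmt16Aux.mode ρ t v₀ = 0 := by
    rintro ⟨a, n⟩ hn
    obtain ⟨h1, h2, h3⟩ := hv n hn
    fin_cases a
    · simpa [Stmt16Aux.mode] using h1
    · simpa [Stmt16Aux.mode] using h2
    · simpa [Stmt16Aux.mode] using h3
  refine ⟨?_, ?_, ?_⟩
  · -- MapsTo
    intro β hβ
    simp only [Set.mem_setOf_eq] at hβ ⊢
    intro m hm
    refine ⟨?_, ?_, ?_⟩
    · ext w
      have h := LinearMap.congr_fun (hβ m).1 (v₀ ⊗ₜ[ℂ] w)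
      simp only [LinearMap.comp_apply, LinearMap.add_apply, TensorProduct.map_tmul,
        LinearMap.id_coe, id_eq, LinearMap.zero_apply, map_add] at h
      rw [(hv m hm).1] at h
      simp only [TensorProduct.zero_tmul, map_zero, zero_add] at h
      simpa [TensorProduct.mk_apply] using h
    · ext w
      have h := LinearMap.congr_fun (hβ m).2.1 (v₀ ⊗ₜ[ℂ] w)
      simp only [LinearMap.comp_apply, LinearMap.add_apply, TensorProduct.map_tmul,
        LinearMap.id_coe, id_eq, LinearMap.zero_apply, map_add] at h
      rw [(hv m hm).2.1] at h
      simp only [TensorProduct.zero_tmul, map_zero, zero_add] at h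
      simpa [TensorProduct.mk_apply] using h
    · ext w
      have h := LinearMap.congr_fun (hβ m).2.2 (v₀ ⊗ₜ[ℂ] w)
      simp only [LinearMap.comp_apply, LinearMap.add_apply, TensorProduct.map_tmul,
        LinearMap.id_coe, id_eq, LinearMap.zero_apply, map_add] at h
      rw [(hv m hm).2.2] at h
      simp only [TensorProduct.zero_tmul, map_zero, zero_add] at h
      simpa [TensorProduct.mk_apply] using h
  · -- InjOn
    intro β₁ h₁ β₂ h₂ heq
    simp only [Set.mem_setOf_eq] at h₁ h₂
    have hc1 := Stmt16Aux.curry_intertwine ρ ρ' β₁ h₁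
    have hc2 := Stmt16Aux.curry_intertwine ρ ρ' β₂ h₂
    have hval : TensorProduct.curry β₁ v₀ = TensorProduct.curry β₂ v₀ := by
      ext w
      have := LinearMap.congr_fun heq w
      simpa [TensorProduct.curry_apply, TensorProduct.mk_apply] using this
    have hbase : ∀ l : {l : List ℕ // l.Chain' (· ≥ ·)},
        TensorProduct.curry β₁ (b l) = TensorProduct.curry β₂ (b l) := by
      intro l
      rw [Stmt16Aux.determined (σ := σ) hb' (TensorProduct.curry β₁) hc1 l.1 l.2,
        Stmt16Aux.determined (σ := σ) hb' (TensorProduct.curry β₂) hc2 l.1 l.2, hval]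
    exact TensorProduct.curry_injective (b.ext hbase)
  · -- SurjOn
    intro ψ hψ
    simp only [Set.mem_setOf_eq] at hψ
    have hψm : ∀ t : Fin 3 × ℤ, 0 ≤ t.2 → Stmt16Aux.mode σ t ψ = 0 := by
      rintro ⟨a, n⟩ hn
      obtain ⟨h1, h2, h3⟩ := hψ n hn
      fin_cases a
      · simp only [Stmt16Aux.mode, hσdef, Stmt16Aux.dualFamily, LinearMap.neg_apply]
        norm_num [Fin.ext_iff]
        exact h1
      · simp only [Stmt16Aux.mode, hσdef, Stmt16Aux.dualFamily, LinearMap.neg_apply]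
        norm_num [Fin.ext_iff]
        exact h2
      · simp only [Stmt16Aux.mode, hσdef, Stmt16Aux.dualFamily, LinearMap.neg_apply]
        norm_num [Fin.ext_iff]
        exact h3
    set F : V →ₗ[ℂ] (W →ₗ[ℂ] ℂ) := b.constr ℂ (fun l => Stmt16Aux.act σ e l.1 ψ) with hF
    have hD := Stmt16Aux.claimD hρ hσ hb' hvm hψm
    refine ⟨TensorProduct.lift F, ?_, ?_⟩
    · simp only [Set.mem_setOf_eq]
      intro n
      refine ⟨?_, ?_, ?_⟩
      · apply TensorProduct.ext'
        intro x w
        simp only [LinearMap.comp_apply, LinearMap.add_apply, TensorProduct.map_tmul,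
          LinearMap.id_coe, id_eq, LinearMap.zero_apply, map_add, TensorProduct.lift.tmul]
        have hmode : Stmt16Aux.mode ρ ((0 : Fin 3), n) = ρ.Jz n := by
          simp [Stmt16Aux.mode, Fin.ext_iff]
        have hmode' : Stmt16Aux.mode σ ((0 : Fin 3), n) = σ.Jz n := by
          simp [Stmt16Aux.mode, Fin.ext_iff]
        have h0 := hD ((0 : Fin 3), n) x
        rw [hmode, hmode', ← hF] at h0
        have h := congrArg (fun φ : W →ₗ[ℂ] ℂ => φ w) h0
        have hrfl : (σ.Jz n (F x)) w = -((F x) ((ρ'.Jz (-n)) w)) := rfl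
        rw [hrfl] at h
        linear_combination h
      · apply TensorProduct.ext'
        intro x w
        simp only [LinearMap.comp_apply, LinearMap.add_apply, TensorProduct.map_tmul,
          LinearMap.id_coe, id_eq, LinearMap.zero_apply, map_add, TensorProduct.lift.tmul]
        have hmode : Stmt16Aux.mode ρ ((1 : Fin 3), n) = ρ.Jp n := by
          simp [Stmt16Aux.mode, Fin.ext_iff]
        have hmode' : Stmt16Aux.mode σ ((1 : Fin 3), n) = σ.Jp n := by
          simp [Stmt16Aux.mode, Fin.ext_iff]
        have h0 := hD ((1 : Fin 3), n) x
        rw [hmode, hmode', ← hF] at h0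
        have h := congrArg (fun φ : W →ₗ[ℂ] ℂ => φ w) h0
        have hrfl : (σ.Jp n (F x)) w = -((F x) ((ρ'.Jp (-n)) w)) := rfl
        rw [hrfl] at h
        linear_combination h
      · apply TensorProduct.ext'
        intro x w
        simp only [LinearMap.comp_apply, LinearMap.add_apply, TensorProduct.map_tmul,
          LinearMap.id_coe, id_eq, LinearMap.zero_apply, map_add, TensorProduct.lift.tmul]
        have hmode : Stmt16Aux.mode ρ ((2 : Fin 3), n) = ρ.Jm n := by
          simp [Stmt16Aux.mode, Fin.ext_iff]
        have hmode' : Stmt16Aux.mode σ ((2 : Fin 3), n) = σ.Jm n := by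
          simp [Stmt16Aux.mode, Fin.ext_iff]
        have h0 := hD ((2 : Fin 3), n) x
        rw [hmode, hmode', ← hF] at h0
        have h := congrArg (fun φ : W →ₗ[ℂ] ℂ => φ w) h0
        have hrfl : (σ.Jm n (F x)) w = -((F x) ((ρ'.Jm (-n)) w)) := rfl
        rw [hrfl] at h
        linear_combination h
    · ext w
      have hv0 : v₀ = b ⟨[], List.isChain_nil⟩ := by
        rw [hb ⟨[], List.isChain_nil⟩]
        simp
      simp only [LinearMap.comp_apply, TensorProduct.mk_apply, TensorProduct.lift.tmul]
      rw [hv0, hF, Module.Basis.constr_basis]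
      simp [Stmt16Aux.act_nil]
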